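/- Let u₁, u₂, v₁, v₂ be words on X^{±1}. Then u₁qu₂ and v₁qv₂ are conjugate in the Miller Machine M(G) if and only if u₁u₂ and v₁v₂ are conjugate in G. -/

import Mathlib

/-!
Common setup: a finitely presented group `G = ⟨X ∣ R⟩` (`X` a finite set, `R` a finite
nonempty set of words of the free group `F(X)`) and its Miller machine `M(G)`,
the group generated by `X ∪ Θ ∪ {q}`, where `Θ = {θ_α : α ∈ X ∪ R}`, subject to
the relations `θ_α x = x θ_α` (`x ∈ X`, `α ∈ X ∪ R`), `θ_x x q = q x θ_x` (`x ∈ X`)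
and `θ_r q = q r θ_r` (`r ∈ R`).
-/

namespace Miller

noncomputable section

/-- Index type for the letters `Θ`: one letter `θ_α` for each `α ∈ X ∪ R`
(since `X ∩ R = ∅`, the disjoint sum is faithful). -/
abbrev ThIdx (X : Type) (R : Finset (FreeGroup X)) : Type := X ⊕ {r : FreeGroup X // r ∈ R}

/-- The generators of the Miller machine: the letters of `X`, the letters `Θ`, and `q`. -/
abbrev Gen (X : Type) (R : Finset (FreeGroup X)) : Type := X ⊕ (ThIdx X R ⊕ Unit)

variable (X : Type) (R : Finset (FreeGroup X))

/-- The letter `x ∈ X`, as a word on the generators of `M(G)`. -/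
def xg (x : X) : FreeGroup (Gen X R) := FreeGroup.of (Sum.inl x)

/-- The letter `θ_α`, as a word on the generators of `M(G)`. -/
def θg (a : ThIdx X R) : FreeGroup (Gen X R) := FreeGroup.of (Sum.inr (Sum.inl a))

/-- The letter `q`, as a word on the generators of `M(G)`. -/
def qg : FreeGroup (Gen X R) := FreeGroup.of (Sum.inr (Sum.inr ()))

/-- A word on `X` is in particular a word on the generators of `M(G)`. -/
def ofX : FreeGroup X →* FreeGroup (Gen X R) := FreeGroup.map Sum.inl

/-- The defining relators of the Miller machine `M(G)`. -/
def rels : Set (FreeGroup (Gen X R)) :=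
  {w | (∃ (a : ThIdx X R) (x : X),
          w = θg X R a * xg X R x * (xg X R x * θg X R a)⁻¹) ∨
       (∃ x : X,
          w = θg X R (Sum.inl x) * xg X R x * qg X R *
              (qg X R * xg X R x * θg X R (Sum.inl x))⁻¹) ∨
       (∃ r : {r : FreeGroup X // r ∈ R},
          w = θg X R (Sum.inr r) * qg X R *
              (qg X R * ofX X R r.1 * θg X R (Sum.inr r))⁻¹)}

/-- The group `G = ⟨X ∣ R⟩`. -/
abbrev G := PresentedGroup (R : Set (FreeGroup X))

/-- The Miller machine `M(G)`. -/
abbrev M := PresentedGroup (rels X R)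

/-- The element of `G` represented by a word on `X`. -/
def toG : FreeGroup X →* G X R := PresentedGroup.mk _

/-- The element of `M(G)` represented by a word on the generators. -/
def toM : FreeGroup (Gen X R) →* M X R := PresentedGroup.mk _

/-- The element of `M(G)` represented by a word on `X`. -/
def embX : FreeGroup X →* M X R := (toM X R).comp (ofX X R)

/-- The element of `M(G)` represented by a word on `Θ`. -/
def embTh : FreeGroup (ThIdx X R) →* M X R :=
  (toM X R).comp (FreeGroup.map fun a => Sum.inr (Sum.inl a))

/-- The generator `x ∈ X` as element of `M(G)`. -/
def xM (x : X) : M X R := toM X R (xg X R x)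

/-- The generator `θ_α` as element of `M(G)`. -/
def θM (a : ThIdx X R) : M X R := toM X R (θg X R a)

/-- The generator `q` as element of `M(G)`. -/
def qM : M X R := toM X R (qg X R)

/-- The subgroup `⟨X, q⟩` of `M(G)`. -/
def XqSub : Subgroup (M X R) := Subgroup.closure (Set.range (xM X R) ∪ {qM X R})

/-- The subgroup `⟨Θ⟩` of `M(G)`. -/
def ThSub : Subgroup (M X R) := Subgroup.closure (Set.range (θM X R))

/-- The subgroup `H = ⟨X ∪ Θ⟩` of `M(G)`. -/
def Hgrp : Subgroup (M X R) := Subgroup.closure (Set.range (xM X R) ∪ Set.range (θM X R))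

/-- The subgroup `K₋₁ = ⟨{θ_x x : x ∈ X} ∪ {θ_r : r ∈ R}⟩` of `M(G)`. -/
def Kneg : Subgroup (M X R) := Subgroup.closure
  ((Set.range fun x : X => θM X R (Sum.inl x) * xM X R x) ∪
   (Set.range fun r : {r : FreeGroup X // r ∈ R} => θM X R (Sum.inr r)))

/-- The subgroup `K₁ = ⟨{θ_x x : x ∈ X} ∪ {θ_r r : r ∈ R}⟩` of `M(G)`. -/
def Kpos : Subgroup (M X R) := Subgroup.closure
  ((Set.range fun x : X => θM X R (Sum.inl x) * xM X R x) ∪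
   (Set.range fun r : {r : FreeGroup X // r ∈ R} => θM X R (Sum.inr r) * embX X R r.1))

/-- `‖g‖`: the (reduced) word length of an element of a free group. -/
def wlen {β : Type} (g : FreeGroup β) : ℕ :=
  sInf {n | ∃ l : List (β × Bool), FreeGroup.mk l = g ∧ l.length = n}

/-- `|g|`: word length in `M(G)` with respect to the generating set `X ∪ Θ ∪ {q}`. -/
def mlen (g : M X R) : ℕ :=
  sInf {n | ∃ w : FreeGroup (Gen X R), toM X R w = g ∧ wlen w = n}

/-- `c(u,v)`: the minimal length of a conjugator taking `u` to `v` in `M(G)`. -/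
def c (u v : M X R) : ℕ :=
  sInf {n | ∃ γ : M X R, γ * u * γ⁻¹ = v ∧ mlen X R γ = n}

/-- `c'(u,v)`: the minimal length of a conjugator in `⟨X ∪ Θ⟩` taking `u` to `v`. -/
def c' (u v : M X R) : ℕ :=
  sInf {n | ∃ γ ∈ Hgrp X R, γ * u * γ⁻¹ = v ∧ mlen X R γ = n}

/-- The product `∏_{i<m} w_i r_i w_i⁻¹`. -/
def prodConj (m : ℕ) (w r : ℕ → FreeGroup X) : FreeGroup X :=
  ((List.range m).map fun i => w i * r i * (w i)⁻¹).prod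

/-- `r_0, …, r_{m-1} ∈ R^{±1}`. -/
def IsRelSeq (m : ℕ) (r : ℕ → FreeGroup X) : Prop := ∀ i < m, r i ∈ R ∨ (r i)⁻¹ ∈ R

/-- `δ(g)`: the least `m` such that `g` is freely equal to a product of `m`
conjugates of elements of `R^{±1}`. -/
def area (g : FreeGroup X) : ℕ :=
  sInf {m | ∃ w r : ℕ → FreeGroup X, IsRelSeq X R m r ∧ g = prodConj X m w r}

/-- The Dehn function `Δ` of the presentation `⟨X ∣ R⟩`. -/
def Dehn (n : ℕ) : ℕ :=
  sSup {d | ∃ g : FreeGroup X, wlen g ≤ n ∧ toG X R g = 1 ∧ area X R g = d}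

/-- `f(w) = m + ‖w₁‖ + ‖w_m‖ + ∑_{i=1}^{m-1} ‖w_i⁻¹ w_{i+1}‖` (with `0`-based indexing). -/
def fval (m : ℕ) (w : ℕ → FreeGroup X) : ℕ :=
  m + wlen (w 0) + wlen (w (m - 1)) + ∑ i ∈ Finset.range (m - 1), wlen ((w i)⁻¹ * w (i + 1))

/-- `λ(g)`: the minimum of `f(w)` over expressions `w = ∏ w_i r_i w_i⁻¹` freely equal to `g`. -/
def lam (g : FreeGroup X) : ℕ :=
  sInf {n | ∃ (m : ℕ) (w r : ℕ → FreeGroup X),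
    1 ≤ m ∧ IsRelSeq X R m r ∧ g = prodConj X m w r ∧ fval X m w = n}

/-- `Λ(n)`: the maximum of `λ(g)` over words `g` with `g =_G 1` and `‖g‖ ≤ n`. -/
def Lam (n : ℕ) : ℕ :=
  sSup {d | ∃ g : FreeGroup X, wlen g ≤ n ∧ toG X R g = 1 ∧ lam X R g = d}

/-- `t = max({‖r‖ : r ∈ R} ∪ {2})`. -/
def t : ℕ := max (R.sup fun r => wlen r) 2

/-- `w, ε` witness the iso-computational list conjugacy `u ∼^σ v` (indices `0,…,k-1`,
with the convention that the index after `k-1` is `0`, i.e. `σ_{k+1} = σ₁`). -/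
def IsICLCWitness (k : ℕ) (σ : ℕ → ℤ) (u v : ℕ → FreeGroup X) (w ε : FreeGroup X) : Prop :=
  toG X R ε = 1 ∧ ∀ i < k,
    (σ i = 1 ∧ σ ((i + 1) % k) = 1 → w * ε * u i * w⁻¹ = v i) ∧
    (σ i = 1 ∧ σ ((i + 1) % k) = -1 → w * ε * u i * ε⁻¹ * w⁻¹ = v i) ∧
    (σ i = -1 ∧ σ ((i + 1) % k) = 1 → w * u i * w⁻¹ = v i) ∧
    (σ i = -1 ∧ σ ((i + 1) % k) = -1 → w * u i * ε⁻¹ * w⁻¹ = v i)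

/-- Iso-computational list conjugacy `u ∼^σ v`. -/
def ICLC (k : ℕ) (σ : ℕ → ℤ) (u v : ℕ → FreeGroup X) : Prop :=
  ∃ w ε : FreeGroup X, IsICLCWitness X R k σ u v w ε

/-- `c_{k,σ}(u,v)`: the least `‖w‖` over witnessing pairs `(w, ε)` for `u ∼^σ v`. -/
def cList (k : ℕ) (σ : ℕ → ℤ) (u v : ℕ → FreeGroup X) : ℕ :=
  sInf {n | ∃ w ε : FreeGroup X, IsICLCWitness X R k σ u v w ε ∧ wlen w = n}

/-- `C_{k,σ}(n)`. -/
def CC (k : ℕ) (σ : ℕ → ℤ) (n : ℕ) : ℕ :=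
  sSup {d | ∃ u v : ℕ → FreeGroup X, ICLC X R k σ u v ∧
    (∑ i ∈ Finset.range k, (wlen (u i) + wlen (v i))) ≤ n - 2 * k ∧
    cList X R k σ u v = d}

/-- The alphabet `X ∪ {q}`. -/
abbrev Yt (X : Type) : Type := X ⊕ Unit

/-- The letter `q` in the free group `F(X ∪ {q})`. -/
def qY : FreeGroup (Yt X) := FreeGroup.of (Sum.inr ())

/-- A word on `X` as a word on `X ∪ {q}`. -/
def embY : FreeGroup X →* FreeGroup (Yt X) := FreeGroup.map Sum.inl

/-- The element of `M(G)` represented by a word on `X ∪ {q}`. -/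
def toMY : FreeGroup (Yt X) →* M X R :=
  (toM X R).comp (FreeGroup.map (Sum.elim Sum.inl fun u => Sum.inr (Sum.inr u)))

/-- The word `q^{σ₁}u₁q^{σ₂}u₂⋯q^{σ_k}u_k` on `X ∪ {q}` (`0`-based indexing). -/
def qword (k : ℕ) (σ : ℕ → ℤ) (u : ℕ → FreeGroup X) : FreeGroup (Yt X) :=
  ((List.range k).map fun i => qY X ^ σ i * embY X (u i)).prod

/-- The word `q^{σ₁}u₁q^{σ₂}u₂⋯q^{σ_k}u_k` is (freely) reduced, expressed as:
its reduced length equals the sum of the lengths of its letters. -/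
def ReducedForm (k : ℕ) (σ : ℕ → ℤ) (u : ℕ → FreeGroup X) : Prop :=
  wlen (qword X k σ u) = k + ∑ i ∈ Finset.range k, wlen (u i)

/-- The element `q^{σ₁}u₁q^{σ₂}u₂⋯q^{σ_k}u_k` of `M(G)`. -/
def qwordM (k : ℕ) (σ : ℕ → ℤ) (u : ℕ → FreeGroup X) : M X R :=
  toMY X R (qword X k σ u)

/-- `σ` is a tuple of signs `±1`. -/
def IsSgn (k : ℕ) (σ : ℕ → ℤ) : Prop := ∀ i < k, σ i = 1 ∨ σ i = -1

/-- `D_{k,σ}(n)`: restriction of the conjugator length function of `M(G)` to conjugate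
pairs `x = q^{σ₁}u₁⋯q^{σ_k}u_k`, `y = q^{σ₁}v₁⋯q^{σ_k}v_k` that are reduced words with
`∑ (‖u_i‖ + ‖v_i‖) ≤ n - 2k`. -/
def Dk (k : ℕ) (σ : ℕ → ℤ) (n : ℕ) : ℕ :=
  sSup {d | ∃ u v : ℕ → FreeGroup X,
    ReducedForm X k σ u ∧ ReducedForm X k σ v ∧
    IsConj (qwordM X R k σ u) (qwordM X R k σ v) ∧
    (∑ i ∈ Finset.range k, (wlen (u i) + wlen (v i))) ≤ n - 2 * k ∧
    c X R (qwordM X R k σ u) (qwordM X R k σ v) = d}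

/-- `D'_{k,σ}(n)`: as `D_{k,σ}(n)`, but for pairs conjugate via an element of `⟨X ∪ Θ⟩`
and with minimal conjugator length measured over conjugators in `⟨X ∪ Θ⟩`. -/
def Dk' (k : ℕ) (σ : ℕ → ℤ) (n : ℕ) : ℕ :=
  sSup {d | ∃ u v : ℕ → FreeGroup X,
    ReducedForm X k σ u ∧ ReducedForm X k σ v ∧
    (∃ γ ∈ Hgrp X R, γ * qwordM X R k σ u * γ⁻¹ = qwordM X R k σ v) ∧
    (∑ i ∈ Finset.range k, (wlen (u i) + wlen (v i))) ≤ n - 2 * k ∧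
    c' X R (qwordM X R k σ u) (qwordM X R k σ v) = d}

/-- `D₀(n)`: restriction of the conjugator length function of `M(G)` to pairs
`(qu, q)` with `u` a word on `X`, `qu` conjugate to `q`, and `‖u‖ ≤ n - 2`. -/
def D0 (n : ℕ) : ℕ :=
  sSup {d | ∃ u : FreeGroup X, wlen u ≤ n - 2 ∧
    IsConj (qM X R * embX X R u) (qM X R) ∧ c X R (qM X R * embX X R u) (qM X R) = d}

/-- `D'₀(n)`: as `D₀(n)`, via conjugators in `⟨X ∪ Θ⟩`. -/
def D0' (n : ℕ) : ℕ :=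
  sSup {d | ∃ u : FreeGroup X, wlen u ≤ n - 2 ∧
    (∃ γ ∈ Hgrp X R, γ * (qM X R * embX X R u) * γ⁻¹ = qM X R) ∧
    c' X R (qM X R * embX X R u) (qM X R) = d}

/-- The endomorphism `φ_α` of `F(X ∪ {q})`: it fixes each `x ∈ X` and sends `q` to
`α⁻¹qα` if `α ∈ X` and to `qα` if `α ∈ R`. -/
def phi (a : ThIdx X R) : FreeGroup (Yt X) →* FreeGroup (Yt X) :=
  FreeGroup.lift fun s =>
    match s with
    | Sum.inl x => FreeGroup.of (Sum.inl x : Yt X)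
    | Sum.inr _ =>
      match a with
      | Sum.inl x' => (FreeGroup.of (Sum.inl x' : Yt X))⁻¹ * qY X * FreeGroup.of (Sum.inl x')
      | Sum.inr r => qY X * embY X r.1

end

end Miller

namespace Miller

noncomputable section StatementZeroAux

variable (X : Type) (R : Finset (FreeGroup X))

lemma toM_rel {w : FreeGroup (Gen X R)} (hw : w ∈ rels X R) : toM X R w = 1 :=
  (QuotientGroup.eq_one_iff w).mpr (Subgroup.subset_normalClosure hw)

lemma rel1 (a : ThIdx X R) (x : X) :
    θM X R a * xM X R x = xM X R x * θM X R a := by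
  have h := toM_rel X R (Or.inl ⟨a, x, rfl⟩)
  simp only [map_mul, map_inv] at h
  rw [mul_inv_eq_one] at h
  exact h

lemma rel2 (x : X) :
    θM X R (Sum.inl x) * xM X R x * qM X R = qM X R * xM X R x * θM X R (Sum.inl x) := by
  have h := toM_rel X R (Or.inr (Or.inl ⟨x, rfl⟩))
  simp only [map_mul, map_inv] at h
  rw [mul_inv_eq_one] at h
  exact h

lemma rel3 (r : {r : FreeGroup X // r ∈ R}) :
    θM X R (Sum.inr r) * qM X R = qM X R * embX X R r.1 * θM X R (Sum.inr r) := by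
  have h := toM_rel X R (Or.inr (Or.inr ⟨r, rfl⟩))
  simp only [map_mul, map_inv] at h
  rw [mul_inv_eq_one] at h
  exact h

lemma embX_of (x : X) : embX X R (FreeGroup.of x) = xM X R x := rfl

lemma θ_comm (a : ThIdx X R) (w : FreeGroup X) :
    Commute (θM X R a) (embX X R w) := by
  induction w using FreeGroup.induction_on with
  | C1 => simp only [map_one]; exact Commute.one_right _
  | of x => exact rel1 X R a x
  | inv_of x h => rw [map_inv]; exact h.inv_right
  | mul y z hy hz => rw [map_mul]; exact hy.mul_right hz

/-- The homomorphism `w ↦ w θ_w` (equivalently `θ_w w`). -/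
def Φ : FreeGroup X →* M X R :=
  FreeGroup.lift fun x => θM X R (Sum.inl x) * xM X R x

lemma Φ_of (x : X) : Φ X R (FreeGroup.of x) = θM X R (Sum.inl x) * xM X R x :=
  FreeGroup.lift_apply_of

lemma Φ_comm_qM (w : FreeGroup X) : Commute (Φ X R w) (qM X R) := by
  induction w using FreeGroup.induction_on with
  | C1 => simp only [map_one]; exact Commute.one_left _
  | of x =>
      have key : Φ X R (FreeGroup.of x) * qM X R = qM X R * Φ X R (FreeGroup.of x) := by
        rw [Φ_of, rel2, mul_assoc, rel1 X R (Sum.inl x) x]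
      exact key
  | inv_of x h => rw [map_inv]; exact h.inv_left
  | mul y z hy hz => rw [map_mul]; exact hy.mul_left hz

lemma Φ_mul_embX (w : FreeGroup X) :
    ∀ z, Φ X R w * embX X R z = embX X R (w * z * w⁻¹) * Φ X R w := by
  induction w using FreeGroup.induction_on with
  | C1 => intro z; simp
  | of x =>
      intro z
      show Φ X R (FreeGroup.of x) * embX X R z
          = embX X R (FreeGroup.of x * z * (FreeGroup.of x)⁻¹) * Φ X R (FreeGroup.of x)
      have hΦx : Φ X R (FreeGroup.of x)
          = θM X R (Sum.inl x) * embX X R (FreeGroup.of x) := Φ_of X R x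
      have lhs_eq : Φ X R (FreeGroup.of x) * embX X R z
          = embX X R (FreeGroup.of x * z) * θM X R (Sum.inl x) := by
        rw [hΦx, mul_assoc, ← map_mul, (θ_comm X R (Sum.inl x) (FreeGroup.of x * z)).eq]
      have rhs_eq : embX X R (FreeGroup.of x * z * (FreeGroup.of x)⁻¹) *
          Φ X R (FreeGroup.of x)
          = embX X R (FreeGroup.of x * z) * θM X R (Sum.inl x) := by
        rw [hΦx, (θ_comm X R (Sum.inl x) (FreeGroup.of x)).eq, ← mul_assoc, ← map_mul,
          show FreeGroup.of x * z * (FreeGroup.of x)⁻¹ * FreeGroup.of x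
            = FreeGroup.of x * z from by group]
      exact lhs_eq.trans rhs_eq.symm
  | inv_of x h =>
      intro z
      replace h : ∀ z, Φ X R (FreeGroup.of x) * embX X R z
          = embX X R (FreeGroup.of x * z * (FreeGroup.of x)⁻¹) * Φ X R (FreeGroup.of x) := h
      show Φ X R (FreeGroup.of x)⁻¹ * embX X R z
          = embX X R ((FreeGroup.of x)⁻¹ * z * ((FreeGroup.of x)⁻¹)⁻¹) *
            Φ X R (FreeGroup.of x)⁻¹
      have harg : FreeGroup.of x * ((FreeGroup.of x)⁻¹ * z * FreeGroup.of x) *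
          (FreeGroup.of x)⁻¹ = z := by group
      have h3 : Φ X R (FreeGroup.of x) *
          embX X R ((FreeGroup.of x)⁻¹ * z * FreeGroup.of x)
          = embX X R z * Φ X R (FreeGroup.of x) := by
        rw [h ((FreeGroup.of x)⁻¹ * z * FreeGroup.of x), harg]
      rw [map_inv, inv_inv, inv_mul_eq_iff_eq_mul, ← mul_assoc, h3, mul_inv_cancel_right]
  | mul a b ha hb =>
      intro z
      have hab : a * (b * z * b⁻¹) * a⁻¹ = a * b * z * (a * b)⁻¹ := by group
      calc Φ X R (a * b) * embX X R z
          = Φ X R a * (Φ X R b * embX X R z) := by rw [map_mul, mul_assoc]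
        _ = Φ X R a * (embX X R (b * z * b⁻¹) * Φ X R b) := by rw [hb z]
        _ = Φ X R a * embX X R (b * z * b⁻¹) * Φ X R b := by rw [← mul_assoc]
        _ = embX X R (a * (b * z * b⁻¹) * a⁻¹) * Φ X R a * Φ X R b := by
            rw [ha (b * z * b⁻¹)]
        _ = embX X R (a * b * z * (a * b)⁻¹) * Φ X R (a * b) := by
            rw [mul_assoc, ← map_mul, hab]

lemma Φ_inv_mul_embX (w z : FreeGroup X) :
    (Φ X R w)⁻¹ * embX X R z = embX X R (w⁻¹ * z * w) * (Φ X R w)⁻¹ := by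
  have := Φ_mul_embX X R w⁻¹ z
  rwa [map_inv, inv_inv] at this

/-- The set of `n` for which there is a conjugator centralizing the image of `F(X)`
and taking `q` to `qn`; a normal subgroup of `F(X)` containing `R`. -/
def Nsub : Subgroup (FreeGroup X) where
  carrier := {n | ∃ γ : M X R, (∀ z, γ * embX X R z = embX X R z * γ) ∧
      γ * qM X R = qM X R * embX X R n * γ}
  one_mem' := ⟨1, fun z => by rw [one_mul, mul_one], by simp⟩
  mul_mem' := by
    rintro n₁ n₂ ⟨γ₁, hc₁, hq₁⟩ ⟨γ₂, hc₂, hq₂⟩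
    refine ⟨γ₁ * γ₂, fun z => by
      rw [mul_assoc, hc₂ z, ← mul_assoc, hc₁ z, mul_assoc], ?_⟩
    calc γ₁ * γ₂ * qM X R = γ₁ * (qM X R * embX X R n₂ * γ₂) := by
          rw [mul_assoc, hq₂]
      _ = (γ₁ * qM X R) * embX X R n₂ * γ₂ := by simp only [mul_assoc]
      _ = qM X R * embX X R n₁ * (γ₁ * embX X R n₂) * γ₂ := by
          rw [hq₁]; simp only [mul_assoc]
      _ = qM X R * embX X R n₁ * (embX X R n₂ * γ₁) * γ₂ := by rw [hc₁ n₂]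
      _ = qM X R * embX X R (n₁ * n₂) * (γ₁ * γ₂) := by
          rw [map_mul]; simp only [mul_assoc]
  inv_mem' := by
    rintro n ⟨γ, hc, hq⟩
    refine ⟨γ⁻¹, fun z => ?_, ?_⟩
    · rw [inv_mul_eq_iff_eq_mul, ← mul_assoc, hc z, mul_inv_cancel_right]
    · have h2 : γ * (embX X R n)⁻¹ = (embX X R n)⁻¹ * γ := by
        rw [← map_inv]; exact hc n⁻¹
      have key : γ * (qM X R * embX X R n⁻¹ * γ⁻¹) = qM X R := by
        calc γ * (qM X R * embX X R n⁻¹ * γ⁻¹)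
            = (γ * qM X R) * embX X R n⁻¹ * γ⁻¹ := by simp only [mul_assoc]
          _ = (qM X R * embX X R n * γ) * embX X R n⁻¹ * γ⁻¹ := by rw [hq]
          _ = qM X R * embX X R n * (γ * (embX X R n)⁻¹) * γ⁻¹ := by
              rw [map_inv]; simp only [mul_assoc]
          _ = qM X R * embX X R n * ((embX X R n)⁻¹ * γ) * γ⁻¹ := by rw [h2]
          _ = qM X R := by simp [mul_assoc]
      calc γ⁻¹ * qM X R = γ⁻¹ * (γ * (qM X R * embX X R n⁻¹ * γ⁻¹)) := by rw [key]
        _ = qM X R * embX X R n⁻¹ * γ⁻¹ := by simp [mul_assoc]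

lemma Nsub_normal : (Nsub X R).Normal := by
  constructor
  rintro n ⟨γ, hc, hq⟩ g
  refine ⟨Φ X R g * γ * (Φ X R g)⁻¹, fun z => ?_, ?_⟩
  · have hz : g * (g⁻¹ * z * g) * g⁻¹ = z := by group
    calc Φ X R g * γ * (Φ X R g)⁻¹ * embX X R z
        = Φ X R g * (γ * (embX X R (g⁻¹ * z * g) * (Φ X R g)⁻¹)) := by
          rw [mul_assoc, mul_assoc, Φ_inv_mul_embX]
      _ = Φ X R g * (embX X R (g⁻¹ * z * g) * (γ * (Φ X R g)⁻¹)) := by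
          rw [← mul_assoc γ, hc (g⁻¹ * z * g), mul_assoc]
      _ = embX X R z * (Φ X R g * γ * (Φ X R g)⁻¹) := by
          rw [← mul_assoc, ← mul_assoc, Φ_mul_embX X R g (g⁻¹ * z * g), hz]
          simp only [mul_assoc]
  · have hΦq : (Φ X R g)⁻¹ * qM X R = qM X R * (Φ X R g)⁻¹ :=
      ((Φ_comm_qM X R g).inv_left).eq
    calc Φ X R g * γ * (Φ X R g)⁻¹ * qM X R
        = Φ X R g * (γ * qM X R) * (Φ X R g)⁻¹ := by
          rw [mul_assoc, mul_assoc, hΦq, ← mul_assoc, ← mul_assoc]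
          simp only [mul_assoc]
      _ = Φ X R g * (qM X R * embX X R n * γ) * (Φ X R g)⁻¹ := by rw [hq]
      _ = (Φ X R g * qM X R) * embX X R n * (γ * (Φ X R g)⁻¹) := by
          simp only [mul_assoc]
      _ = qM X R * (Φ X R g * embX X R n) * (γ * (Φ X R g)⁻¹) := by
          rw [(Φ_comm_qM X R g).eq]; simp only [mul_assoc]
      _ = qM X R * embX X R (g * n * g⁻¹) * (Φ X R g * γ * (Φ X R g)⁻¹) := by
          rw [Φ_mul_embX X R g n]; simp only [mul_assoc]

lemma mem_Nsub_of_toG_eq_one {n : FreeGroup X} (h : toG X R n = 1) : n ∈ Nsub X R := by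
  haveI := Nsub_normal X R
  have h1 : n ∈ Subgroup.normalClosure (R : Set (FreeGroup X)) :=
    (QuotientGroup.eq_one_iff n).mp h
  refine Subgroup.normalClosure_le_normal ?_ h1
  intro r hr
  exact ⟨θM X R (Sum.inr ⟨r, hr⟩), fun z => (θ_comm X R (Sum.inr ⟨r, hr⟩) z).eq,
    rel3 X R ⟨r, hr⟩⟩

/-- Generator images for the retraction `M(G) → G` killing `Θ` and `q`. -/
def πf : Gen X R → G X R :=
  Sum.elim (fun x => toG X R (FreeGroup.of x)) fun _ => (1 : G X R)

lemma lift_πf_ofX (g : FreeGroup X) :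
    FreeGroup.lift (πf X R) (ofX X R g) = toG X R g := by
  have h : (FreeGroup.lift (πf X R)).comp (ofX X R) = toG X R := by
    refine FreeGroup.ext_hom _ _ fun a => ?_
    simp [ofX, πf, toG]
  exact DFunLike.congr_fun h g

lemma toG_rel {r : FreeGroup X} (hr : r ∈ R) : toG X R r = 1 :=
  (QuotientGroup.eq_one_iff r).mpr (Subgroup.subset_normalClosure hr)

lemma π_rels : ∀ w ∈ rels X R, FreeGroup.lift (πf X R) w = 1 := by
  rintro w (⟨a, x, rfl⟩ | ⟨x, rfl⟩ | ⟨r, rfl⟩)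
  · simp [θg, xg, qg, πf]
  · simp [θg, xg, qg, πf]
  · simp only [map_mul, map_inv]
    rw [lift_πf_ofX X R r.1, toG_rel X R r.2]
    simp [θg, qg, πf]

/-- The retraction `M(G) → G`. -/
def π : M X R →* G X R := PresentedGroup.toGroup (π_rels X R)

lemma π_toM (w : FreeGroup (Gen X R)) : π X R (toM X R w) = FreeGroup.lift (πf X R) w := rfl

lemma π_embX (g : FreeGroup X) : π X R (embX X R g) = toG X R g :=
  lift_πf_ofX X R g

lemma π_qM : π X R (qM X R) = 1 := by
  have : π X R (toM X R (qg X R)) = FreeGroup.lift (πf X R) (qg X R) := rfl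
  simpa [qM, qg, πf] using this

end StatementZeroAux

end Miller


open Miller in
/-- Miller. Let `u₁, u₂, v₁, v₂` be words on `X^{±1}`. Then `u₁qu₂` and
`v₁qv₂` are conjugate in the Miller machine `M(G)` if and only if `u₁u₂` and `v₁v₂` are
conjugate in `G`. -/
theorem statement0 (X : Type) [Fintype X] (R : Finset (FreeGroup X)) (hR : R.Nonempty)
    (u₁ u₂ v₁ v₂ : FreeGroup X) :
    IsConj (embX X R u₁ * qM X R * embX X R u₂) (embX X R v₁ * qM X R * embX X R v₂) ↔
      IsConj (toG X R (u₁ * u₂)) (toG X R (v₁ * v₂)) := by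
  constructor
  · intro h
    have h2 := (π X R).map_isConj h
    simp only [map_mul, π_embX, π_qM, mul_one] at h2
    rw [map_mul, map_mul]
    exact h2
  · intro h
    obtain ⟨c, hc⟩ := isConj_iff.mp h
    obtain ⟨w, hw⟩ := PresentedGroup.mk_surjective (R : Set (FreeGroup X))
      (toG X R v₂ * c * toG X R u₁)
    have hw' : toG X R w = toG X R v₂ * c * toG X R u₁ := hw
    set n : FreeGroup X := v₂ * v₁ * (w * (u₂ * u₁) * w⁻¹)⁻¹ with hn
    have hc' : c * (toG X R u₁ * toG X R u₂) * c⁻¹ = toG X R v₁ * toG X R v₂ := by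
      rw [← map_mul, ← map_mul]; exact hc
    have hW : toG X R w * (toG X R u₂ * toG X R u₁) * (toG X R w)⁻¹
        = toG X R v₂ * toG X R v₁ := by
      rw [hw']
      have e1 : toG X R v₂ * c * toG X R u₁ * (toG X R u₂ * toG X R u₁) *
          (toG X R v₂ * c * toG X R u₁)⁻¹
          = toG X R v₂ * (c * (toG X R u₁ * toG X R u₂) * c⁻¹) * (toG X R v₂)⁻¹ := by
        group
      rw [e1, hc']
      group
    have hn1 : toG X R n = 1 := by
      rw [hn]
      simp only [map_mul, map_inv]
      rw [hW]
      group
    obtain ⟨γ, hγc, hγq⟩ := mem_Nsub_of_toG_eq_one X R hn1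
    have step1 : IsConj (embX X R u₁ * qM X R * embX X R u₂)
        (qM X R * embX X R (u₂ * u₁)) := by
      refine isConj_iff.mpr ⟨(embX X R u₁)⁻¹, ?_⟩
      rw [map_mul]; group
    have step2 : IsConj (qM X R * embX X R (u₂ * u₁))
        (qM X R * embX X R (w * (u₂ * u₁) * w⁻¹)) := by
      refine isConj_iff.mpr ⟨Φ X R w, ?_⟩
      calc Φ X R w * (qM X R * embX X R (u₂ * u₁)) * (Φ X R w)⁻¹
          = (Φ X R w * qM X R) * embX X R (u₂ * u₁) * (Φ X R w)⁻¹ := by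
            simp only [mul_assoc]
        _ = (qM X R * Φ X R w) * embX X R (u₂ * u₁) * (Φ X R w)⁻¹ := by
            rw [(Φ_comm_qM X R w).eq]
        _ = qM X R * (Φ X R w * embX X R (u₂ * u₁)) * (Φ X R w)⁻¹ := by
            simp only [mul_assoc]
        _ = qM X R * (embX X R (w * (u₂ * u₁) * w⁻¹) * Φ X R w) * (Φ X R w)⁻¹ := by
            rw [Φ_mul_embX X R w (u₂ * u₁)]
        _ = qM X R * embX X R (w * (u₂ * u₁) * w⁻¹) := by
            simp [mul_assoc]
    have step3 : IsConj (qM X R * embX X R (w * (u₂ * u₁) * w⁻¹))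
        (qM X R * embX X R (v₂ * v₁)) := by
      refine isConj_iff.mpr ⟨γ, ?_⟩
      calc γ * (qM X R * embX X R (w * (u₂ * u₁) * w⁻¹)) * γ⁻¹
          = (γ * qM X R) * embX X R (w * (u₂ * u₁) * w⁻¹) * γ⁻¹ := by
            simp only [mul_assoc]
        _ = (qM X R * embX X R n * γ) * embX X R (w * (u₂ * u₁) * w⁻¹) * γ⁻¹ := by
            rw [hγq]
        _ = qM X R * embX X R n * (γ * embX X R (w * (u₂ * u₁) * w⁻¹)) * γ⁻¹ := by
            simp only [mul_assoc]
        _ = qM X R * embX X R n * (embX X R (w * (u₂ * u₁) * w⁻¹) * γ) * γ⁻¹ := by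
            rw [hγc (w * (u₂ * u₁) * w⁻¹)]
        _ = qM X R * (embX X R n * embX X R (w * (u₂ * u₁) * w⁻¹)) := by
            simp [mul_assoc]
        _ = qM X R * embX X R (v₂ * v₁) := by
            rw [← map_mul]
            congr 1
            rw [hn]
            group
    have step4 : IsConj (qM X R * embX X R (v₂ * v₁))
        (embX X R v₁ * qM X R * embX X R v₂) := by
      refine isConj_iff.mpr ⟨embX X R v₁, ?_⟩
      rw [map_mul]; group
    exact ((step1.trans step2).trans step3).trans step4
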